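/- Let A and B be real symmetric positive semidefinite m×m matrices and let c > 0. Then ‖A(A + cI)⁻¹ − B(B + cI)⁻¹‖₂ ≤ (1/c)·‖A − B‖₂. -/

import Mathlib

open Matrix
open scoped Matrix.Norms.L2Operator

/-- Spectral (operator 2-) norm of a real square matrix. -/
noncomputable def matSpectralNorm {m : ℕ} (A : Matrix (Fin m) (Fin m) ℝ) : ℝ :=
  ‖Matrix.toEuclideanCLM (𝕜 := ℝ) A‖

/-- Euclidean (ℓ²) norm of a vector in ℝ^m. -/
noncomputable def l2norm {m : ℕ} (v : Fin m → ℝ) : ℝ :=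
  Real.sqrt (∑ i, v i ^ 2)

lemma spectralNorm_eq {m : ℕ} (A : Matrix (Fin m) (Fin m) ℝ) : matSpectralNorm A = ‖A‖ := rfl

lemma smul_one_posDef {m : ℕ} {c : ℝ} (hc : 0 < c) :
    (c • (1 : Matrix (Fin m) (Fin m) ℝ)).PosDef := by
  exact Matrix.PosDef.one.smul hc

lemma inv_norm_le {m : ℕ} {A : Matrix (Fin m) (Fin m) ℝ} (hA : A.PosSemidef)
    {c : ℝ} (hc : 0 < c) : ‖(A + c • 1)⁻¹‖ ≤ 1 / c := by
  set M := A + c • (1 : Matrix (Fin m) (Fin m) ℝ) with hMdef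
  have hM : M.PosDef := Matrix.PosDef.posSemidef_add hA (smul_one_posDef hc)
  have hunit : IsUnit M.det := (Matrix.isUnit_iff_isUnit_det M).mp hM.isUnit
  have hMinv : M * M⁻¹ = 1 := Matrix.mul_nonsing_inv M hunit
  set T := Matrix.toEuclideanCLM (𝕜 := ℝ) M⁻¹ with hT
  show ‖T‖ ≤ 1 / c
  refine ContinuousLinearMap.opNorm_le_bound _ (by positivity) fun y => ?_
  set x := T y with hx
  have hMx : Matrix.toEuclideanCLM (𝕜 := ℝ) M x = y := by
    have h2 : Matrix.toEuclideanCLM (𝕜 := ℝ) M * T = 1 := by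
      rw [hT, ← _root_.map_mul, hMinv, _root_.map_one]
    calc Matrix.toEuclideanCLM (𝕜 := ℝ) M x
        = (Matrix.toEuclideanCLM (𝕜 := ℝ) M * T) y := rfl
      _ = y := by rw [h2]; rfl
  have hinner : c * ‖x‖ ^ 2 ≤ (inner ℝ x y : ℝ) := by
    have hxy : (inner ℝ x y : ℝ) =
        dotProduct (star (WithLp.equiv 2 _ x)) (M *ᵥ (WithLp.equiv 2 _ x)) := by
      rw [← hMx, EuclideanSpace.inner_eq_star_dotProduct, dotProduct_comm]
      rfl
    have hAx : 0 ≤ dotProduct (star (WithLp.equiv 2 _ x)) (A *ᵥ (WithLp.equiv 2 _ x)) :=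
      hA.dotProduct_mulVec_nonneg _
    have hnorm : dotProduct (star (WithLp.equiv 2 _ x))
        ((c • (1 : Matrix (Fin m) (Fin m) ℝ)) *ᵥ (WithLp.equiv 2 _ x)) = c * ‖x‖ ^ 2 := by
      have h1 : (c • (1 : Matrix (Fin m) (Fin m) ℝ)) *ᵥ (WithLp.equiv 2 _ x)
          = c • (WithLp.equiv 2 _ x) := by
        simp [Matrix.smul_mulVec]
      rw [h1, dotProduct_smul]
      have h2 : dotProduct (star (WithLp.equiv 2 _ x)) (WithLp.equiv 2 _ x) = ‖x‖ ^ 2 := by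
        rw [dotProduct_comm, ← EuclideanSpace.inner_eq_star_dotProduct, real_inner_self_eq_norm_sq]; rfl
      rw [h2]; rfl
    rw [hxy, hMdef, Matrix.add_mulVec, dotProduct_add, hnorm]
    linarith
  have hbound : c * ‖x‖ ^ 2 ≤ ‖x‖ * ‖y‖ :=
    le_trans hinner (real_inner_le_norm x y)
  rcases eq_or_lt_of_le (norm_nonneg x) with h0 | h0
  · rw [← h0]; positivity
  · have hcx : c * ‖x‖ ≤ ‖y‖ := by
      have h3 := mul_le_mul_of_nonneg_right hbound (le_of_lt (inv_pos.mpr h0))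
      calc c * ‖x‖ = c * ‖x‖ ^ 2 * ‖x‖⁻¹ := by field_simp [ne_of_gt h0]
        _ ≤ ‖x‖ * ‖y‖ * ‖x‖⁻¹ := h3
        _ = ‖y‖ := by field_simp
    calc ‖x‖ = (1/c) * (c * ‖x‖) := by field_simp
      _ ≤ 1 / c * ‖y‖ := mul_le_mul_of_nonneg_left hcx (by positivity)

/-- Contraction inequality (core matrix estimate of Lemma 1). -/
theorem resolvent_contraction {m : ℕ}
    (A B : Matrix (Fin m) (Fin m) ℝ)
    (hA : A.PosSemidef) (hB : B.PosSemidef)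
    (c : ℝ) (hc : 0 < c) :
    matSpectralNorm (A * (A + c • 1)⁻¹ - B * (B + c • 1)⁻¹) ≤
      (1 / c) * matSpectralNorm (A - B) := by
  set M := A + c • (1 : Matrix (Fin m) (Fin m) ℝ) with hMdef
  set N := B + c • (1 : Matrix (Fin m) (Fin m) ℝ) with hNdef
  have hM : M.PosDef := Matrix.PosDef.posSemidef_add hA (smul_one_posDef hc)
  have hN : N.PosDef := Matrix.PosDef.posSemidef_add hB (smul_one_posDef hc)
  have hMd : IsUnit M.det := (Matrix.isUnit_iff_isUnit_det M).mp hM.isUnit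
  have hNd : IsUnit N.det := (Matrix.isUnit_iff_isUnit_det N).mp hN.isUnit
  have hMinv : M * M⁻¹ = 1 := Matrix.mul_nonsing_inv M hMd
  have hMinv' : M⁻¹ * M = 1 := Matrix.nonsing_inv_mul M hMd
  have hNinv : N * N⁻¹ = 1 := Matrix.mul_nonsing_inv N hNd
  have key : A * M⁻¹ - B * N⁻¹ = c • (M⁻¹ * (A - B) * N⁻¹) := by
    have e1 : A * M⁻¹ = 1 - c • M⁻¹ := by
      have h : A = M - c • 1 := by rw [hMdef]; abel
      rw [h, sub_mul, hMinv, smul_mul_assoc, one_mul]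
    have e2 : B * N⁻¹ = 1 - c • N⁻¹ := by
      have h : B = N - c • 1 := by rw [hNdef]; abel
      rw [h, sub_mul, hNinv, smul_mul_assoc, one_mul]
    have e3 : M⁻¹ * (A - B) * N⁻¹ = N⁻¹ - M⁻¹ := by
      have hab : A - B = M - N := by rw [hMdef, hNdef]; abel
      rw [hab, mul_sub, hMinv', sub_mul, one_mul, mul_assoc, hNinv, mul_one]
    rw [e1, e2, e3, smul_sub]
    abel
  rw [spectralNorm_eq, spectralNorm_eq, key]
  have hMn : ‖M⁻¹‖ ≤ 1 / c := inv_norm_le hA hc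
  have hNn : ‖N⁻¹‖ ≤ 1 / c := inv_norm_le hB hc
  calc ‖c • (M⁻¹ * (A - B) * N⁻¹)‖ = c * ‖M⁻¹ * (A - B) * N⁻¹‖ := by
        rw [norm_smul, Real.norm_of_nonneg (le_of_lt hc)]
    _ ≤ c * (‖M⁻¹ * (A - B)‖ * ‖N⁻¹‖) :=
        mul_le_mul_of_nonneg_left (Matrix.l2_opNorm_mul _ _) (le_of_lt hc)
    _ ≤ c * ((‖M⁻¹‖ * ‖A - B‖) * ‖N⁻¹‖) := by
        apply mul_le_mul_of_nonneg_left _ (le_of_lt hc)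
        exact mul_le_mul_of_nonneg_right (Matrix.l2_opNorm_mul _ _) (norm_nonneg _)
    _ ≤ c * (((1/c) * ‖A - B‖) * (1/c)) := by
        apply mul_le_mul_of_nonneg_left _ (le_of_lt hc)
        apply mul_le_mul
        · exact mul_le_mul_of_nonneg_right hMn (norm_nonneg _)
        · exact hNn
        · exact norm_nonneg _
        · positivity
    _ = (1/c) * ‖A - B‖ := by field_simp
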